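/- Let K = ℚ_2(π) where π² = 2, with the unique extension |·| of the 2-adic absolute value to K (so |π| = 2^{-1/2}). Let b_1 = 1 + π and b_2 = π, and let Λ = ℤ_2 b_1 + ℤ_2 b_2 ⊆ K. Then b_1, b_2 is a |·|-orthogonal basis of Λ, but the dual basis d_1 = 1, d_2 = π − 1 (with respect to the pairing given by coordinates in the basis 1, π of K over ℚ_2) is NOT |·|-orthogonal: |d_1 + d_2| = 2^{-1/2} < 1 = max(|d_1|, |d_2|). -/

import Mathlib

open scoped BigOperators

/-- The `i`-th successive maximum of a set `Λ ⊆ ℚ_p^n` with respect to a norm `N`: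
the largest `r` such that `Λ` contains `i` linearly independent vectors of `N`-norm `≥ r`. -/
noncomputable def succMax (p : ℕ) [Fact p.Prime] (n : ℕ)
    (N : (Fin n → ℚ_[p]) → ℝ) (Λ : Set (Fin n → ℚ_[p])) (i : ℕ) : ℝ :=
  sSup {r : ℝ | ∃ s : Fin i → (Fin n → ℚ_[p]),
    (∀ k, s k ∈ Λ) ∧ LinearIndependent ℚ_[p] s ∧ ∀ k, r ≤ N (s k)}

/-- The `ℤ_p`-lattice spanned by the vectors `b`. -/
def latticeSet (p : ℕ) [Fact p.Prime] {n m : ℕ} (b : Fin m → (Fin n → ℚ_[p])) :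
    Set (Fin n → ℚ_[p]) :=
  {x | ∃ c : Fin m → ℤ_[p], x = ∑ j, (c j : ℚ_[p]) • b j}

/-- The dual lattice of `Λ` w.r.t. the standard bilinear pairing `⟨x,y⟩ = ∑ x j * y j`. -/
def dualSet (p : ℕ) [Fact p.Prime] {n : ℕ} (Λ : Set (Fin n → ℚ_[p])) :
    Set (Fin n → ℚ_[p]) :=
  {y | ∀ x ∈ Λ, ∃ z : ℤ_[p], (z : ℚ_[p]) = ∑ j, x j * y j}

/-- A family `b` is `N`-orthogonal if `N (∑ cᵢ bᵢ) = maxᵢ N (cᵢ bᵢ)` for all scalars. -/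
def IsOrthogonal (p : ℕ) [Fact p.Prime] {n m : ℕ}
    (N : (Fin n → ℚ_[p]) → ℝ) (b : Fin m → (Fin n → ℚ_[p])) : Prop :=
  ∀ c : Fin m → ℚ_[p], N (∑ i, c i • b i) = ⨆ i, N (c i • b i)

/-- in `K = ℚ₂(π)`, `π² = 2`, written in coordinates over the basis
`(1, π)` with the extended absolute value `N (a,b) = max(|a|₂, 2^{-1/2}|b|₂)`:
the basis `b₁ = 1 + π`, `b₂ = π` is `N`-orthogonal, but its dual basis
`d₁ = 1`, `d₂ = π - 1` is not, since `N(d₁ + d₂) = 2^{-1/2} < 1 = max(N d₁, N d₂)`. -/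

lemma iSup_fin2 (f : Fin 2 → ℝ) : (⨆ i, f i) = max (f 0) (f 1) := by
  apply le_antisymm
  · apply ciSup_le
    intro i
    fin_cases i
    · exact le_max_left _ _
    · exact le_max_right _ _
  · apply max_le
    · exact le_ciSup (Set.Finite.bddAbove (Set.finite_range f)) 0
    · exact le_ciSup (Set.Finite.bddAbove (Set.finite_range f)) 1

theorem stmt13 :
    let N : (Fin 2 → ℚ_[2]) → ℝ :=
      fun v => max ‖v 0‖ ((2 : ℝ) ^ (-(1 : ℝ) / 2) * ‖v 1‖)
    let b : Fin 2 → (Fin 2 → ℚ_[2]) := ![![1, 1], ![0, 1]]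
    let d : Fin 2 → (Fin 2 → ℚ_[2]) := ![![1, 0], ![-1, 1]]
    IsOrthogonal 2 N b ∧
    ¬ IsOrthogonal 2 N d ∧
    N (d 0 + d 1) = (2 : ℝ) ^ (-(1 : ℝ) / 2) ∧
    max (N (d 0)) (N (d 1)) = 1 := by
  intro N b d
  have hr0 : (0:ℝ) < (2:ℝ) ^ (-(1:ℝ)/2) := Real.rpow_pos_of_pos (by norm_num) _
  have hr1 : (2:ℝ) ^ (-(1:ℝ)/2) < 1 :=
    Real.rpow_lt_one_of_one_lt_of_neg (by norm_num) (by norm_num)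
  set r : ℝ := (2:ℝ) ^ (-(1:ℝ)/2) with hr
  have hNd01 : N (d 0 + d 1) = r := by
    have h0 : (d 0 + d 1) 0 = 0 := by simp [d]
    have h1 : (d 0 + d 1) 1 = 1 := by simp [d]
    simp [N, h0, h1, hr0.le]
    exact max_eq_right hr0.le
  have hNd0 : N (d 0) = 1 := by
    have h0 : d 0 0 = 1 := by simp [d]
    have h1 : d 0 1 = 0 := by simp [d]
    simp [N, h0, h1, hr1.le]
  have hNd1 : N (d 1) = 1 := by
    have h0 : d 1 0 = -1 := by simp [d]
    have h1 : d 1 1 = 1 := by simp [d]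
    simp [N, h0, h1, hr1.le]
    exact hr1.le
  refine ⟨?_, ?_, hNd01, by rw [hNd0, hNd1]; simp⟩
  · intro c
    have h0 : (∑ i, c i • b i) 0 = c 0 := by
      simp [b, Fin.sum_univ_two]
    have h1 : (∑ i, c i • b i) 1 = c 0 + c 1 := by
      simp [b, Fin.sum_univ_two]
    have hb0 : N (c 0 • b 0) = ‖c 0‖ := by
      have e0 : (c 0 • b 0) 0 = c 0 := by simp [b]
      have e1 : (c 0 • b 0) 1 = c 0 := by simp [b]
      simp only [N, e0, e1]
      exact max_eq_left (by nlinarith [norm_nonneg (c 0)])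
    have hb1 : N (c 1 • b 1) = r * ‖c 1‖ := by
      have e0 : (c 1 • b 1) 0 = 0 := by simp [b]
      have e1 : (c 1 • b 1) 1 = c 1 := by simp [b]
      simp only [N, e0, e1, norm_zero]
      exact max_eq_right (by positivity)
    rw [iSup_fin2, hb0, hb1]
    simp only [N, h0, h1]
    rcases le_or_gt ‖c 1‖ ‖c 0‖ with hle | hlt
    · have hadd : ‖c 0 + c 1‖ ≤ ‖c 0‖ :=
        le_trans (Padic.nonarchimedean _ _) (max_le le_rfl hle)
      rw [max_eq_left, max_eq_left]
      · nlinarith [norm_nonneg (c 1)]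
      · nlinarith [norm_nonneg (c 0)]
    · have hadd : ‖c 0 + c 1‖ = ‖c 1‖ := by
        rw [Padic.add_eq_max_of_ne (ne_of_lt hlt)]
        exact max_eq_right hlt.le
      rw [hadd]
  · intro h
    have := h ![1, 1]
    have h0 : (∑ i, (![1,1] : Fin 2 → ℚ_[2]) i • d i) = d 0 + d 1 := by
      simp [Fin.sum_univ_two]
    rw [h0, hNd01, iSup_fin2] at this
    have e0 : (![1,1] : Fin 2 → ℚ_[2]) 0 • d 0 = d 0 := by simp
    have e1 : (![1,1] : Fin 2 → ℚ_[2]) 1 • d 1 = d 1 := by simp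
    rw [e0, e1, hNd0, hNd1] at this
    simp at this
    linarith
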